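/- A compact Hausdorff space with a countable network is metrizable (equivalently, second countable). -/
import Mathlib


/-- `N` is a network for `X`. -/
def IsNetwork {X : Type u} [TopologicalSpace X] (N : Set (Set X)) : Prop :=
  ∀ x : X, ∀ U : Set X, IsOpen U → x ∈ U → ∃ n ∈ N, x ∈ n ∧ n ⊆ U

/-- Arhangel'skii's metrization theorem: a compact Hausdorff space with a countable
network is metrizable (equivalently, second countable). -/
theorem compact_countable_network_metrizable {X : Type u} [TopologicalSpace X]
    [CompactSpace X] [T2Space X]
    (h : ∃ N : Set (Set X), N.Countable ∧ IsNetwork N) :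
    TopologicalSpace.MetrizableSpace X ∧ SecondCountableTopology X := by
  classical
  obtain ⟨N, hNc, hN⟩ := h
  -- separation predicate on pairs of sets
  set Sep : Set X × Set X → Prop := fun p => ∃ q : Set X × Set X,
    IsOpen q.1 ∧ IsOpen q.2 ∧ p.1 ⊆ q.1 ∧ p.2 ⊆ q.2 ∧ Disjoint q.1 q.2 with hSep
  choose! f hf using fun (p : Set X × Set X) (hp : Sep p) => hp
  -- the countable family of "U-sides"
  set B0 : Set (Set X) := (fun p => (f p).1) '' {p | p.1 ∈ N ∧ p.2 ∈ N ∧ Sep p} with hB0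
  have hB0c : B0.Countable := by
    apply Set.Countable.image
    have : {p : Set X × Set X | p.1 ∈ N ∧ p.2 ∈ N ∧ Sep p} ⊆ N ×ˢ N := by
      rintro ⟨a, b⟩ ⟨h1, h2, _⟩; exact ⟨h1, h2⟩
    exact (hNc.prod hNc).mono this
  set B : Set (Set X) := Set.sInter '' {t | t.Finite ∧ t ⊆ B0} with hB
  have hBc : B.Countable := (Set.countable_setOf_finite_subset hB0c).image _
  have hBopen : ∀ s ∈ B, IsOpen s := by
    rintro s ⟨t, ⟨htf, htB⟩, rfl⟩
    apply Set.Finite.isOpen_sInter htf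
    rintro u hu
    obtain ⟨p, hp, rfl⟩ := htB hu
    exact (hf p hp.2.2).1
  have hbasis : TopologicalSpace.IsTopologicalBasis B := by
    apply TopologicalSpace.isTopologicalBasis_of_isOpen_of_nhds hBopen
    intro x W hxW hW
    -- K is the compact complement
    have hK : IsCompact Wᶜ := hW.isClosed_compl.isCompact
    -- for each y ∈ Wᶜ pick a separated network pair
    have key : ∀ y : (Wᶜ : Set X), ∃ p : Set X × Set X, p.1 ∈ N ∧ p.2 ∈ N ∧ Sep p ∧
        x ∈ (f p).1 ∧ (y : X) ∈ (f p).2 := by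
      rintro ⟨y, hy⟩
      have hxy : x ≠ y := by rintro rfl; exact hy hxW
      obtain ⟨U, V, hU, hV, hxU, hyV, hUV⟩ := t2_separation hxy
      obtain ⟨M, hM, hxM, hMU⟩ := hN x U hU hxU
      obtain ⟨M', hM', hyM', hM'V⟩ := hN y V hV hyV
      have hs : Sep (M, M') := ⟨(U, V), hU, hV, hMU, hM'V, hUV⟩
      obtain ⟨hof1, hof2, hsub1, hsub2, hdis⟩ := hf (M, M') hs
      exact ⟨(M, M'), hM, hM', hs, hsub1 hxM, hsub2 hyM'⟩
    choose p hp1 hp2 hp3 hp4 hp5 using key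
    -- cover Wᶜ by the V-sides
    obtain ⟨t, ht⟩ := hK.elim_finite_subcover (fun y : (Wᶜ : Set X) => (f (p y)).2)
      (fun y => (hf (p y) (hp3 y)).2.1)
      (fun z hz => Set.mem_iUnion.2 ⟨⟨z, hz⟩, hp5 ⟨z, hz⟩⟩)
    -- the base element
    refine ⟨⋂₀ ((fun y => (f (p y)).1) '' (t : Set (Wᶜ : Set X))), ?_, ?_, ?_⟩
    · exact ⟨_, ⟨(t.finite_toSet.image _), by
        rintro u ⟨y, hy, rfl⟩; exact ⟨p y, ⟨hp1 y, hp2 y, hp3 y⟩, rfl⟩⟩, rfl⟩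
    · rintro u ⟨y, hy, rfl⟩; exact hp4 y
    · intro z hz
      by_contra hzW
      obtain ⟨y, hyt, hzy⟩ := Set.mem_iUnion₂.1 (ht hzW)
      have hz1 : z ∈ (f (p y)).1 := hz _ ⟨y, hyt, rfl⟩
      exact ((hf (p y) (hp3 y)).2.2.2.2).le_bot ⟨hz1, hzy⟩
  have h2 : SecondCountableTopology X := hbasis.secondCountableTopology hBc
  have h3 : TopologicalSpace.MetrizableSpace X := by
    have : T3Space X := inferInstance
    exact TopologicalSpace.metrizableSpace_of_t3_secondCountable X
  exact ⟨h3, h2⟩
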